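/- Let G be a graph on [n] that has the interval property with respect to its labeling, let H = in_lex(G), and let M = {x_{i_1}, y_{j_1}}, …, {x_{i_m}, y_{j_m}} be an induced matching of H with i_1 < ⋯ < i_m satisfying condition (∗). Suppose for some index s with 1 ≤ s ≤ m−1 that {i_s, i_{s+1}} is not an edge of G but {j_s, i_{s+1}} is an edge of G. Then M together with the additional edge {x_{j_s}, y_{i_{s+1}}} is an induced matching of H of cardinality m+1. -/

import Mathlib

open SimpleGraph

/-- `G` has the interval property with respect to its labeling: for every edge `{i,j}`
with `i < j`, every pair `{k,l}` with `i ≤ k < l ≤ j` is an edge of `G`. -/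
def HasIntervalProperty {n : ℕ} (G : SimpleGraph (Fin n)) : Prop :=
  ∀ i j k l : Fin n, G.Adj i j → i < j → i ≤ k → k < l → l ≤ j → G.Adj k l

/-- The bipartite graph `in_lex(G)` on `{x_1,…,x_n} ∪ {y_1,…,y_n}` (here `Sum.inl i = x_i`,
`Sum.inr j = y_j`) whose edges are the pairs `{x_i, y_j}` with `i < j` and `{i,j} ∈ E(G)`. -/
def inLex {n : ℕ} (G : SimpleGraph (Fin n)) : SimpleGraph (Fin n ⊕ Fin n) :=
  SimpleGraph.fromRel (fun u v =>
    ∃ i j : Fin n, i < j ∧ G.Adj i j ∧ u = Sum.inl i ∧ v = Sum.inr j)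

/-- `M` is an induced matching of `H`: a set of edges of `H`, pairwise vertex-disjoint,
such that no edge of `H` joins two vertices lying in distinct edges of `M`. -/
def IsInducedMatching {V : Type*} (H : SimpleGraph V) (M : Set (Sym2 V)) : Prop :=
  M ⊆ H.edgeSet ∧
  (∀ e ∈ M, ∀ f ∈ M, e ≠ f → ∀ v, v ∈ e → v ∉ f) ∧
  (∀ e ∈ M, ∀ f ∈ M, e ≠ f → ∀ u ∈ e, ∀ v ∈ f, ¬ H.Adj u v)

/-- An indexed family of `m` pairwise distinct edges forming an induced matching of `H`. -/
def IsInducedMatchingFamily {V : Type*} (H : SimpleGraph V) {m : ℕ} (f : Fin m → Sym2 V) : Prop :=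
  Function.Injective f ∧ IsInducedMatching H (Set.range f)

/-- `p` is an induced path of length `l` in `G`: `l+1` distinct vertices such that the edges
of `G` among them are exactly the consecutive pairs. -/
def IsInducedPath {V : Type*} (G : SimpleGraph V) (l : ℕ) (p : Fin (l + 1) → V) : Prop :=
  Function.Injective p ∧
  ∀ a b : Fin (l + 1), G.Adj (p a) (p b) ↔ ((a : ℕ) + 1 = b ∨ (b : ℕ) + 1 = a)

/-- `c` is an induced cycle of length `k` in `H`: `k` distinct vertices such that the edges
of `H` among them are exactly the consecutive pairs (cyclically). -/
def IsInducedCycle {V : Type*} (H : SimpleGraph V) (k : ℕ) (c : Fin k → V) : Prop :=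
  3 ≤ k ∧ Function.Injective c ∧
  ∀ a b : Fin k, H.Adj (c a) (c b) ↔ (((a : ℕ) + 1) % k = b ∨ ((b : ℕ) + 1) % k = a)

/-- Condition (∗) for an induced matching `{x_{i t}, y_{j t}}` of `in_lex(G)`: for every
index `a` and vertex `t < i a` with `{t, j a} ∈ E(G)`, replacing `x_{i a}` by `x_t`
does not yield an induced matching of `in_lex(G)`. -/
def CondStar {n m : ℕ} (G : SimpleGraph (Fin n)) (i j : Fin m → Fin n) : Prop :=
  ∀ a : Fin m, ∀ t : Fin n, t < i a → G.Adj t (j a) →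
    ¬ IsInducedMatchingFamily (inLex G)
        (fun u => if u = a then s(Sum.inl t, Sum.inr (j u))
                  else s(Sum.inl (i u), Sum.inr (j u)))


section AuxLemmas

variable {n : ℕ} {G : SimpleGraph (Fin n)}

lemma inLex_adj_inl_inr {p q : Fin n} :
    (inLex G).Adj (Sum.inl p) (Sum.inr q) ↔ p < q ∧ G.Adj p q := by
  constructor
  · intro h
    rw [inLex, SimpleGraph.fromRel_adj] at h
    obtain ⟨-, h | h⟩ := h <;> obtain ⟨i', j', hij, hadj, hu, hv⟩ := h
    · obtain ⟨rfl, rfl⟩ : p = i' ∧ q = j' := ⟨Sum.inl.inj hu, Sum.inr.inj hv⟩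
      exact ⟨hij, hadj⟩
    · exact absurd hu (by simp)
  · rintro ⟨hlt, hadj⟩
    rw [inLex, SimpleGraph.fromRel_adj]
    exact ⟨by simp, Or.inl ⟨p, q, hlt, hadj, rfl, rfl⟩⟩

lemma inLex_not_adj_inl_inl {p q : Fin n} : ¬ (inLex G).Adj (Sum.inl p) (Sum.inl q) := by
  intro h
  rw [inLex, SimpleGraph.fromRel_adj] at h
  obtain ⟨-, h | h⟩ := h <;> obtain ⟨i', j', -, -, h1', h2'⟩ := h
  · exact absurd h2' (by simp)
  · exact absurd h2' (by simp)

lemma inLex_not_adj_inr_inr {p q : Fin n} : ¬ (inLex G).Adj (Sum.inr p) (Sum.inr q) := by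
  intro h
  rw [inLex, SimpleGraph.fromRel_adj] at h
  obtain ⟨-, h | h⟩ := h <;> obtain ⟨i', j', -, -, h1', h2'⟩ := h
  · exact absurd h1' (by simp)
  · exact absurd h1' (by simp)

end AuxLemmas

/-- Case (a) in the proof of Proposition 2.4: if `M` is an induced matching of `in_lex(G)`
satisfying (∗), `{i_a, i_b} ∉ E(G)` and `{j_a, i_b} ∈ E(G)` for consecutive indices
`a, b`, then `M ∪ {{x_{j_a}, y_{i_b}}}` is an induced matching of cardinality `m + 1`. -/
theorem stmt_10 {n m : ℕ} (G : SimpleGraph (Fin n)) (hG : HasIntervalProperty G)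
    (i j : Fin m → Fin n) (hmono : StrictMono i)
    (hM : IsInducedMatchingFamily (inLex G)
      (fun t => s(Sum.inl (i t), Sum.inr (j t))))
    (hstar : CondStar G i j)
    (a b : Fin m) (hab : (a : ℕ) + 1 = b)
    (h1 : ¬ G.Adj (i a) (i b)) (h2 : G.Adj (j a) (i b)) :
    IsInducedMatching (inLex G)
      (Set.range (fun t => s(Sum.inl (i t), Sum.inr (j t))) ∪
        {s(Sum.inl (j a), Sum.inr (i b))}) ∧
    (Set.range (fun t => s(Sum.inl (i t), Sum.inr (j t))) ∪
        {s(Sum.inl (j a), Sum.inr (i b))}).ncard = m + 1 := by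
  classical
  set F : Fin m → Sym2 (Fin n ⊕ Fin n) := fun t => s(Sum.inl (i t), Sum.inr (j t)) with hF
  obtain ⟨hinj, hsub, hdisj, hind⟩ := hM
  have hne_f : ∀ u v : Fin m, u ≠ v → F u ≠ F v := fun u v h he => h (hinj he)
  have hmemF : ∀ t : Fin m, F t ∈ Set.range F := fun t => ⟨t, rfl⟩
  have hmemFl : ∀ t : Fin m, Sum.inl (i t) ∈ F t := fun t => by simp [hF]
  have hmemFr : ∀ t : Fin m, Sum.inr (j t) ∈ F t := fun t => by simp [hF]
  have hEdge : ∀ t : Fin m, i t < j t ∧ G.Adj (i t) (j t) := by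
    intro t
    have h := hsub (hmemF t)
    rw [hF] at h
    simp only [SimpleGraph.mem_edgeSet] at h
    exact inLex_adj_inl_inr.mp h
  have hab' : a < b := by rw [Fin.lt_def]; omega
  have hiab : i a < i b := hmono hab'
  have hjinj : Function.Injective j := by
    intro u v huv
    by_contra hne
    exact hdisj (F u) (hmemF u) (F v) (hmemF v) (hne_f u v hne) (Sum.inr (j u)) (hmemFr u)
      (by rw [huv]; exact hmemFr v)
  have hja_lt_ib : j a < i b := by
    rcases lt_trichotomy (j a) (i b) with h | h | h
    · exact h
    · rw [h] at h2; exact absurd h2 (G.loopless.irrefl _)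
    · exact absurd (hG (i a) (j a) (i a) (i b) (hEdge a).2 (hEdge a).1 le_rfl hiab h.le) h1
  have hja_ne_i : ∀ s : Fin m, j a ≠ i s := by
    intro s h
    have has : a < s := hmono.lt_iff_lt.mp (h ▸ (hEdge a).1)
    have hbs : b ≤ s := by
      rw [Fin.le_def]; rw [Fin.lt_def] at has; omega
    rcases eq_or_lt_of_le hbs with rfl | hbs
    · exact absurd (h ▸ hja_lt_ib) (lt_irrefl _)
    · exact absurd (h ▸ hja_lt_ib) (not_lt.mpr (hmono hbs).le)
  have hib_ne_j : ∀ s : Fin m, i b ≠ j s := by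
    intro s h
    have hsb : s < b := hmono.lt_iff_lt.mp (h ▸ (hEdge s).1)
    have hsa : s ≤ a := by rw [Fin.le_def]; rw [Fin.lt_def] at hsb; omega
    rcases eq_or_lt_of_le hsa with rfl | hsa
    · exact absurd (h ▸ hja_lt_ib) (lt_irrefl _)
    · have hisja : i s < j a := lt_trans (hmono hsa) (hEdge a).1
      have hadj : G.Adj (i s) (j a) :=
        hG (i s) (j s) (i s) (j a) (hEdge s).2 (hEdge s).1 le_rfl hisja
          (le_of_lt (h ▸ hja_lt_ib))
      exact hind (F s) (hmemF s) (F a) (hmemF a) (hne_f s a hsa.ne) (Sum.inl (i s)) (hmemFl s)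
        (Sum.inr (j a)) (hmemFr a) (inLex_adj_inl_inr.mpr ⟨hisja, hadj⟩)
  have key2 : ∀ t : Fin m, ¬ (inLex G).Adj (Sum.inl (i t)) (Sum.inr (i b)) := by
    intro t h
    obtain ⟨hlt, hadj⟩ := inLex_adj_inl_inr.mp h
    have htb : t < b := hmono.lt_iff_lt.mp hlt
    have hta : t ≤ a := by rw [Fin.le_def]; rw [Fin.lt_def] at htb; omega
    rcases eq_or_lt_of_le hta with rfl | hta
    · exact h1 hadj
    · exact h1 (hG (i t) (i b) (i a) (i b) hadj hlt (hmono hta).le hiab le_rfl)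
  have key1 : ∀ t : Fin m, ¬ (inLex G).Adj (Sum.inl (j a)) (Sum.inr (j t)) := by
    intro t h
    obtain ⟨hlt, hadj⟩ := inLex_adj_inl_inr.mp h
    have hta : t ≠ a := by rintro rfl; exact lt_irrefl _ hlt
    rcases lt_trichotomy (i t) (j a) with hc | hc | hc
    · have hadj' : G.Adj (i t) (j a) :=
        hG (i t) (j t) (i t) (j a) (hEdge t).2 (hEdge t).1 le_rfl hc hlt.le
      exact hind (F t) (hmemF t) (F a) (hmemF a) (hne_f t a hta) (Sum.inl (i t)) (hmemFl t)
        (Sum.inr (j a)) (hmemFr a) (inLex_adj_inl_inr.mpr ⟨hc, hadj'⟩)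
    · exact hja_ne_i t hc.symm
    · by_cases hex : ∃ s : Fin m, ¬ s = t ∧ j a < j s ∧ G.Adj (j a) (j s)
      · obtain ⟨s, hst, hjs, hadjs⟩ := hex
        have hsa : s ≠ a := by rintro rfl; exact absurd hadjs (G.loopless.irrefl _)
        rcases lt_or_ge (i t) (j s) with hc2 | hc2
        · have hadj' : G.Adj (i t) (j s) :=
            hG (j a) (j s) (i t) (j s) hadjs hjs hc.le hc2 le_rfl
          exact hind (F t) (hmemF t) (F s) (hmemF s) (hne_f t s (Ne.symm hst)) (Sum.inl (i t))
            (hmemFl t) (Sum.inr (j s)) (hmemFr s) (inLex_adj_inl_inr.mpr ⟨hc2, hadj'⟩)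
        · rcases lt_or_ge (i s) (j a) with hc3 | hc3
          · have hadj' : G.Adj (i s) (j a) :=
              hG (i s) (j s) (i s) (j a) (hEdge s).2 (hEdge s).1 le_rfl hc3 hjs.le
            exact hind (F s) (hmemF s) (F a) (hmemF a) (hne_f s a hsa) (Sum.inl (i s)) (hmemFl s)
              (Sum.inr (j a)) (hmemFr a) (inLex_adj_inl_inr.mpr ⟨hc3, hadj'⟩)
          · have hlt2 : i s < j t := lt_of_lt_of_le (hEdge s).1 (le_trans hc2 (hEdge t).1.le)
            have hadj' : G.Adj (i s) (j t) :=
              hG (j a) (j t) (i s) (j t) hadj hlt hc3 hlt2 le_rfl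
            exact hind (F s) (hmemF s) (F t) (hmemF t) (hne_f s t hst) (Sum.inl (i s)) (hmemFl s)
              (Sum.inr (j t)) (hmemFr t) (inLex_adj_inl_inr.mpr ⟨hlt2, hadj'⟩)
      · push_neg at hex
        apply hstar t (j a) hc hadj
        refine ⟨?_, ?_, ?_, ?_⟩
        · -- injectivity of the replaced family
          intro u v huv
          simp only at huv
          by_cases hu : u = t <;> by_cases hv : v = t
          · rw [hu, hv]
          · rw [if_pos hu, if_neg hv, Sym2.eq_iff] at huv
            rcases huv with ⟨h1', -⟩ | ⟨h1', -⟩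
            · exact absurd (Sum.inl.inj h1') (hja_ne_i v)
            · exact absurd h1' (by simp)
          · rw [if_neg hu, if_pos hv, Sym2.eq_iff] at huv
            rcases huv with ⟨h1', -⟩ | ⟨-, h2'⟩
            · exact absurd (Sum.inl.inj h1').symm (hja_ne_i u)
            · exact absurd h2' (by simp)
          · rw [if_neg hu, if_neg hv, Sym2.eq_iff] at huv
            rcases huv with ⟨h1', -⟩ | ⟨h1', -⟩
            · exact hmono.injective (Sum.inl.inj h1')
            · exact absurd h1' (by simp)
        · -- edges
          rintro e ⟨u, rfl⟩
          simp only
          by_cases hu : u = t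
          · subst hu
            rw [if_pos rfl, SimpleGraph.mem_edgeSet]
            exact inLex_adj_inl_inr.mpr ⟨hlt, hadj⟩
          · rw [if_neg hu, SimpleGraph.mem_edgeSet]
            exact inLex_adj_inl_inr.mpr ⟨(hEdge u).1, (hEdge u).2⟩
        · -- vertex disjoint
          rintro e ⟨u, rfl⟩ e' ⟨v, rfl⟩ hef w hw hw'
          simp only at hw hw'
          have huv : u ≠ v := by rintro rfl; exact hef rfl
          by_cases hu : u = t <;> by_cases hv : v = t
          · exact huv (hu.trans hv.symm)
          · subst hu
            rw [if_pos rfl, Sym2.mem_iff] at hw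
            rw [if_neg hv, Sym2.mem_iff] at hw'
            rcases hw with rfl | rfl <;> rcases hw' with h' | h'
            · exact hja_ne_i v (Sum.inl.inj h')
            · exact absurd h' (by simp)
            · exact absurd h' (by simp)
            · exact huv (hjinj (Sum.inr.inj h'))
          · subst hv
            rw [if_neg hu, Sym2.mem_iff] at hw
            rw [if_pos rfl, Sym2.mem_iff] at hw'
            rcases hw with rfl | rfl <;> rcases hw' with h' | h'
            · exact hja_ne_i u (Sum.inl.inj h').symm
            · exact absurd h' (by simp)
            · exact absurd h' (by simp)
            · exact huv (hjinj (Sum.inr.inj h'))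
          · rw [if_neg hu] at hw
            rw [if_neg hv] at hw'
            exact hdisj (F u) (hmemF u) (F v) (hmemF v) (hne_f u v huv) w hw hw'
        · -- induced
          rintro e ⟨u, rfl⟩ e' ⟨v, rfl⟩ hef w hw w' hw' hAdj
          simp only at hw hw'
          have huv : u ≠ v := by rintro rfl; exact hef rfl
          by_cases hu : u = t <;> by_cases hv : v = t
          · exact huv (hu.trans hv.symm)
          · subst hu
            rw [if_pos rfl, Sym2.mem_iff] at hw
            rw [if_neg hv, Sym2.mem_iff] at hw'
            rcases hw with rfl | rfl <;> rcases hw' with rfl | rfl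
            · exact inLex_not_adj_inl_inl hAdj
            · obtain ⟨h3, h4⟩ := inLex_adj_inl_inr.mp hAdj
              exact hex v hv h3 h4
            · exact hind (F v) (hmemF v) (F u) (hmemF u) (hne_f v u hv) (Sum.inl (i v)) (hmemFl v)
                (Sum.inr (j u)) (hmemFr u) hAdj.symm
            · exact inLex_not_adj_inr_inr hAdj
          · subst hv
            rw [if_neg hu, Sym2.mem_iff] at hw
            rw [if_pos rfl, Sym2.mem_iff] at hw'
            rcases hw with rfl | rfl <;> rcases hw' with rfl | rfl
            · exact inLex_not_adj_inl_inl hAdj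
            · exact hind (F u) (hmemF u) (F v) (hmemF v) (hne_f u v hu) (Sum.inl (i u)) (hmemFl u)
                (Sum.inr (j v)) (hmemFr v) hAdj
            · obtain ⟨h3, h4⟩ := inLex_adj_inl_inr.mp hAdj.symm
              exact hex u hu h3 h4
            · exact inLex_not_adj_inr_inr hAdj
          · rw [if_neg hu] at hw
            rw [if_neg hv] at hw'
            exact hind (F u) (hmemF u) (F v) (hmemF v) (hne_f u v huv) w hw w' hw' hAdj
  -- final assembly
  have hnotmem : s(Sum.inl (j a), Sum.inr (i b)) ∉ Set.range F := by
    rintro ⟨t, ht⟩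
    simp only [hF, Sym2.eq_iff] at ht
    rcases ht with ⟨h1', -⟩ | ⟨h1', -⟩
    · exact hja_ne_i t (Sum.inl.inj h1').symm
    · exact absurd h1' (by simp)
  refine ⟨⟨?_, ?_, ?_⟩, ?_⟩
  · rintro e (⟨u, rfl⟩ | he)
    · exact hsub (hmemF u)
    · rw [Set.mem_singleton_iff] at he
      subst he
      rw [SimpleGraph.mem_edgeSet]
      exact inLex_adj_inl_inr.mpr ⟨hja_lt_ib, h2⟩
  · rintro e (⟨u, rfl⟩ | he) e' (⟨v, rfl⟩ | he') hef w hw hw'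
    · exact hdisj (F u) (hmemF u) (F v) (hmemF v) hef w hw hw'
    · rw [Set.mem_singleton_iff] at he'
      subst he'
      simp only [hF, Sym2.mem_iff] at hw
      rw [Sym2.mem_iff] at hw'
      rcases hw with rfl | rfl <;> rcases hw' with h' | h'
      · exact hja_ne_i u (Sum.inl.inj h').symm
      · exact absurd h' (by simp)
      · exact absurd h' (by simp)
      · exact hib_ne_j u (Sum.inr.inj h').symm
    · rw [Set.mem_singleton_iff] at he
      subst he
      rw [Sym2.mem_iff] at hw
      simp only [hF, Sym2.mem_iff] at hw'
      rcases hw with rfl | rfl <;> rcases hw' with h' | h'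
      · exact hja_ne_i v (Sum.inl.inj h')
      · exact absurd h' (by simp)
      · exact absurd h' (by simp)
      · exact hib_ne_j v (Sum.inr.inj h')
    · rw [Set.mem_singleton_iff] at he he'
      exact hef (he.trans he'.symm)
  · rintro e (⟨u, rfl⟩ | he) e' (⟨v, rfl⟩ | he') hef w hw w' hw' hAdj
    · exact hind (F u) (hmemF u) (F v) (hmemF v) hef w hw w' hw' hAdj
    · rw [Set.mem_singleton_iff] at he'
      subst he'
      simp only [hF, Sym2.mem_iff] at hw
      rw [Sym2.mem_iff] at hw'
      rcases hw with rfl | rfl <;> rcases hw' with rfl | rfl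
      · exact inLex_not_adj_inl_inl hAdj
      · exact key2 u hAdj
      · exact key1 u hAdj.symm
      · exact inLex_not_adj_inr_inr hAdj
    · rw [Set.mem_singleton_iff] at he
      subst he
      rw [Sym2.mem_iff] at hw
      simp only [hF, Sym2.mem_iff] at hw'
      rcases hw with rfl | rfl <;> rcases hw' with rfl | rfl
      · exact inLex_not_adj_inl_inl hAdj
      · exact key1 v hAdj
      · exact key2 v hAdj.symm
      · exact inLex_not_adj_inr_inr hAdj
    · rw [Set.mem_singleton_iff] at he he'
      exact hef (he.trans he'.symm)
  · rw [Set.union_singleton, Set.ncard_insert_of_notMem hnotmem (Set.finite_range F)]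
    congr 1
    have h := Nat.card_range_of_injective hinj
    rw [Nat.card_coe_set_eq, Nat.card_eq_fintype_card, Fintype.card_fin] at h
    exact h
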